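/- Fix a with -1 ≤ a < 1, and let 𝔤 = 𝔯_{3,a} be ℝ³ with brackets [e₁,e₂]=e₂, [e₁,e₃]=a e₃. Then the standard inner product making {e₁,e₂,e₃} orthonormal is a solvsoliton: its Ricci operator Ric = -diag(1+a², 1+a, a(1+a)) lies in ℝ·id ⊕ Der(𝔤). -/
import Mathlib


set_option maxHeartbeats 2000000
open Matrix

noncomputable section

/-- standard basis of ℝ³ -/
def e (i : Fin 3) : Fin 3 → ℝ := Pi.single i 1

/-- standard inner product on ℝ³ (the basis `e` is orthonormal) -/
def dotp (x y : Fin 3 → ℝ) : ℝ := ∑ i, x i * y i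

/-- Levi-Civita connection of the metric Lie algebra (ℝ³, br, dotp), via
    2⟨∇_X Y, Z⟩ = ⟨[Z,X],Y⟩ + ⟨X,[Z,Y]⟩ + ⟨[X,Y],Z⟩. -/
def nabla (br : (Fin 3 → ℝ) → (Fin 3 → ℝ) → (Fin 3 → ℝ)) (X Y : Fin 3 → ℝ) :
    Fin 3 → ℝ :=
  fun k => (1/2) * (dotp (br (e k) X) Y + dotp X (br (e k) Y) + dotp (br X Y) (e k))

/-- Riemannian curvature R(X,Y)Z = ∇_X∇_Y Z - ∇_Y∇_X Z - ∇_{[X,Y]}Z. -/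
def curv (br : (Fin 3 → ℝ) → (Fin 3 → ℝ) → (Fin 3 → ℝ)) (X Y Z : Fin 3 → ℝ) :
    Fin 3 → ℝ :=
  nabla br X (nabla br Y Z) - nabla br Y (nabla br X Z) - nabla br (br X Y) Z

/-- Ricci operator Ric(X) = Σᵢ R(X,eᵢ)eᵢ. -/
def ric (br : (Fin 3 → ℝ) → (Fin 3 → ℝ) → (Fin 3 → ℝ)) (X : Fin 3 → ℝ) :
    Fin 3 → ℝ :=
  ∑ i, curv br X (e i) (e i)

/-- The bracket of 𝔯_{3,a} : [e₁,e₂]=e₂, [e₁,e₃]=a e₃, [e₂,e₃]=0. -/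
def br3a (a : ℝ) (x y : Fin 3 → ℝ) : Fin 3 → ℝ :=
  ![0,
    x 0 * y 1 - x 1 * y 0,
    a * (x 0 * y 2 - x 2 * y 0)]

/-- The standard inner product on 𝔯_{3,a} is a solvsoliton:
    Ric = -diag(1+a², 1+a, a(1+a)) ∈ ℝ·id ⊕ Der(𝔤). -/
theorem r3a_solvsoliton (a : ℝ) (ha₁ : -1 ≤ a) (ha₂ : a < 1) :
    (∀ i : Fin 3, ric (br3a a) (e i) =
      Matrix.mulVec (-(Matrix.diagonal ![1 + a^2, 1 + a, a * (1 + a)])) (e i)) ∧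
    ∃ (c : ℝ) (D : Matrix (Fin 3) (Fin 3) ℝ),
      (∀ x y, D.mulVec (br3a a x y) =
        br3a a (D.mulVec x) y + br3a a x (D.mulVec y)) ∧
      ∀ i : Fin 3, ric (br3a a) (e i) = c • e i + D.mulVec (e i) := by

  have hric : ∀ i : Fin 3, ric (br3a a) (e i) =
      Matrix.mulVec (-(Matrix.diagonal ![1 + a^2, 1 + a, a * (1 + a)])) (e i) := by
    intro i
    fin_cases i <;> funext k <;> fin_cases k <;>
      simp [ric, curv, nabla, br3a, dotp, e, Fin.sum_univ_three, Matrix.mulVec,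
        Matrix.diagonal, dotProduct, Pi.single_apply, Fin.sum_univ_succ] <;> ring
  refine ⟨hric, -(1 + a^2), Matrix.diagonal ![0, a^2 - a, 1 - a], ?_, ?_⟩
  · intro x y
    funext k
    fin_cases k <;>
      simp [br3a, Matrix.mulVec, Matrix.diagonal, dotProduct,
        Fin.sum_univ_three] <;> ring
  · intro i
    rw [hric i]
    fin_cases i <;> funext k <;> fin_cases k <;>
      simp [e, Matrix.mulVec, Matrix.diagonal, dotProduct,
        Pi.single_apply, Fin.sum_univ_three] <;> ring
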